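/- The function f(t_1,...,t_k) = 1/(t_1 ··· t_k) is operator convex on R_+^k: for positive definite matrices A_1,...,A_k and B_1,...,B_k, ((A_1+B_1)/2)^{−1} ⊗ ··· ⊗ ((A_k+B_k)/2)^{−1} ≤ (A_1^{−1} ⊗ ··· ⊗ A_k^{−1} + B_1^{−1} ⊗ ··· ⊗ B_k^{−1})/2 in the Loewner order. -/

import Mathlib

open Matrix
open scoped ComplexOrder

/-- The tensor (Kronecker) product of a `k`-tuple of matrices. -/
def tensorPi {k : ℕ} {n : Fin k → ℕ} (M : ∀ i, Matrix (Fin (n i)) (Fin (n i)) ℂ) :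
    Matrix (∀ i, Fin (n i)) (∀ i, Fin (n i)) ℂ :=
  Matrix.of fun a b => ∏ i, M i (a i) (b i)

namespace OpConvAux

variable {k : ℕ} {n : Fin k → ℕ}

lemma tensorPi_mul (M N : ∀ i, Matrix (Fin (n i)) (Fin (n i)) ℂ) :
    tensorPi (fun i => M i * N i) = tensorPi M * tensorPi N := by
  ext a b
  show (∏ i, (M i * N i) (a i) (b i))
      = ∑ c : (∀ i, Fin (n i)), (∏ i, M i (a i) (c i)) * ∏ i, N i (c i) (b i)
  simp only [Matrix.mul_apply]
  rw [Finset.prod_univ_sum, Fintype.piFinset_univ]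
  exact Finset.sum_congr rfl fun c _ => Finset.prod_mul_distrib

lemma tensorPi_conjTranspose (M : ∀ i, Matrix (Fin (n i)) (Fin (n i)) ℂ) :
    tensorPi (fun i => (M i)ᴴ) = (tensorPi M)ᴴ := by
  ext a b
  show (∏ i, (M i)ᴴ (a i) (b i)) = star (∏ i, M i (b i) (a i))
  rw [star_prod]
  exact Finset.prod_congr rfl fun i _ => rfl

lemma tensorPi_diagonal (v : ∀ i, Fin (n i) → ℂ) :
    tensorPi (fun i => diagonal (v i)) = diagonal (fun a => ∏ i, v i (a i)) := by
  ext a b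
  show (∏ i, diagonal (v i) (a i) (b i)) = diagonal (fun a => ∏ i, v i (a i)) a b
  by_cases h : a = b
  · subst h; simp [diagonal_apply_eq]
  · obtain ⟨i, hi⟩ := Function.ne_iff.mp h
    rw [diagonal_apply_ne _ h]
    exact Finset.prod_eq_zero (Finset.mem_univ i) (diagonal_apply_ne _ hi)

lemma tensorPi_conj (T : ∀ i, Matrix (Fin (n i)) (Fin (n i)) ℂ) (v : ∀ i, Fin (n i) → ℂ) :
    tensorPi (fun i => (T i)ᴴ * diagonal (v i) * T i)
      = (tensorPi T)ᴴ * diagonal (fun a => ∏ i, v i (a i)) * tensorPi T := by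
  calc tensorPi (fun i => ((T i)ᴴ * diagonal (v i)) * T i)
      = tensorPi (fun i => (T i)ᴴ * diagonal (v i)) * tensorPi T := tensorPi_mul _ _
    _ = (tensorPi (fun i => (T i)ᴴ) * tensorPi (fun i => diagonal (v i))) * tensorPi T := by
        rw [tensorPi_mul]
    _ = (tensorPi T)ᴴ * diagonal (fun a => ∏ i, v i (a i)) * tensorPi T := by
        rw [tensorPi_conjTranspose, tensorPi_diagonal]

lemma posDef_conj {m : ℕ} {B X Y : Matrix (Fin m) (Fin m) ℂ} (hB : B.PosDef)
    (hXY : Y * X = 1) : (Xᴴ * B * X).PosDef := by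
  refine posDef_iff_dotProduct_mulVec.mpr ⟨isHermitian_conjTranspose_mul_mul X hB.1, fun x hx => ?_⟩
  have hx' : X *ᵥ x ≠ 0 := by
    intro h
    apply hx
    have h2 : Y *ᵥ (X *ᵥ x) = Y *ᵥ 0 := by rw [h]
    simpa [mulVec_mulVec, hXY] using h2
  simpa only [star_mulVec, dotProduct_mulVec, vecMul_vecMul] using (posDef_iff_dotProduct_mulVec.mp hB).2 hx'

lemma inv_diagonal' {m : ℕ} (v : Fin m → ℂ) (hv : ∀ j, v j ≠ 0) :
    (diagonal v)⁻¹ = diagonal (fun j => (v j)⁻¹) := by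
  apply Matrix.inv_eq_right_inv
  rw [diagonal_mul_diagonal]
  have h : (fun j => v j * (v j)⁻¹) = fun _ : Fin m => (1:ℂ) :=
    funext fun j => mul_inv_cancel₀ (hv j)
  rw [h, diagonal_one]

lemma inv_conj {m : ℕ} {S : Matrix (Fin m) (Fin m) ℂ} (v : Fin m → ℂ) (hv : ∀ j, v j ≠ 0) :
    (S * diagonal v * Sᴴ)⁻¹ = (S⁻¹)ᴴ * diagonal (fun j => (v j)⁻¹) * S⁻¹ := by
  rw [Matrix.mul_inv_rev, Matrix.mul_inv_rev, inv_diagonal' v hv,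
    conjTranspose_nonsing_inv, Matrix.mul_assoc]

open scoped MatrixOrder in
set_option maxHeartbeats 1000000 in
lemma decomp {m : ℕ} {A B : Matrix (Fin m) (Fin m) ℂ} (hA : A.PosDef) (hB : B.PosDef) :
    ∃ (T : Matrix (Fin m) (Fin m) ℂ) (d : Fin m → ℝ),
      (∀ j, 0 < d j) ∧
      A⁻¹ = Tᴴ * diagonal (fun _ => ((1:ℝ):ℂ)) * T ∧
      B⁻¹ = Tᴴ * diagonal (fun j => (((d j)⁻¹ : ℝ):ℂ)) * T ∧
      (((1:ℝ)/2) • (A + B))⁻¹ = Tᴴ * diagonal (fun j => ((2/(1+d j) : ℝ):ℂ)) * T := by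
  have hApsd := hA.posSemidef
  set R : Matrix (Fin m) (Fin m) ℂ := CFC.sqrt A with hRdef
  have hRps : R.PosSemidef := (CFC.sqrt_nonneg A).posSemidef
  have hRH : Rᴴ = R := hRps.1
  have hRR : R * R = A := CFC.sqrt_mul_sqrt_self A hApsd.nonneg
  have hAdet : IsUnit A.det := (Matrix.isUnit_iff_isUnit_det A).mp hA.isUnit
  have hRdet : IsUnit R.det := by
    have h2 : IsUnit (R.det * R.det) := by rw [← det_mul, hRR]; exact hAdet
    exact isUnit_of_mul_isUnit_left h2
  have hRR' : R * R⁻¹ = 1 := Matrix.mul_nonsing_inv R hRdet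
  have hR'R : R⁻¹ * R = 1 := Matrix.nonsing_inv_mul R hRdet
  have hRinvH : (R⁻¹)ᴴ = R⁻¹ := by rw [conjTranspose_nonsing_inv, hRH]
  have hMpd : (R⁻¹ * B * R⁻¹).PosDef := by
    have := posDef_conj hB hRR'
    rwa [hRinvH] at this
  set M : Matrix (Fin m) (Fin m) ℂ := R⁻¹ * B * R⁻¹ with hMdef
  have hHerm : M.IsHermitian := hMpd.1
  set d : Fin m → ℝ := hHerm.eigenvalues with hddef
  have hd : ∀ j, 0 < d j := hMpd.eigenvalues_pos
  set U : Matrix (Fin m) (Fin m) ℂ := (hHerm.eigenvectorUnitary : Matrix (Fin m) (Fin m) ℂ)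
    with hUdef
  have hspec : M = U * diagonal (fun j => ((d j : ℝ):ℂ)) * star U := hHerm.spectral_theorem
  have hU1 : U * star U = 1 := Matrix.mem_unitaryGroup_iff.mp hHerm.eigenvectorUnitary.2
  set S : Matrix (Fin m) (Fin m) ℂ := R * U with hSdef
  have hSH : Sᴴ = star U * R := by
    rw [conjTranspose_mul, hRH, ← Matrix.star_eq_conjTranspose]
  have hSdet : IsUnit S.det := by
    rw [det_mul]
    exact hRdet.mul (isUnit_det_of_right_inverse hU1)
  have hconj : ∀ v : Fin m → ℂ, S * diagonal v * Sᴴ = R * (U * diagonal v * star U) * R := by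
    intro v
    rw [hSH, hSdef]
    simp only [Matrix.mul_assoc]
  have hSA : S * diagonal (fun _ => ((1:ℝ):ℂ)) * Sᴴ = A := by
    have h1 : diagonal (fun _ : Fin m => ((1:ℝ):ℂ)) = 1 := by simp
    rw [hconj, h1, Matrix.mul_one, hU1, Matrix.mul_one, hRR]
  have hSB : S * diagonal (fun j => ((d j : ℝ):ℂ)) * Sᴴ = B := by
    rw [hconj, ← hspec, hMdef]
    rw [show R * (R⁻¹ * B * R⁻¹) * R = (R * R⁻¹) * B * (R⁻¹ * R) by
      simp only [Matrix.mul_assoc], hRR', hR'R, Matrix.one_mul, Matrix.mul_one]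
  have hSC : S * diagonal (fun j => (((1 + d j)/2 : ℝ):ℂ)) * Sᴴ = ((1:ℝ)/2) • (A + B) := by
    have hdg : diagonal (fun j => (((1 + d j)/2 : ℝ):ℂ))
        = ((1:ℝ)/2) • (diagonal (fun _ : Fin m => ((1:ℝ):ℂ)) + diagonal (fun j => ((d j : ℝ):ℂ))) := by
      ext a b
      by_cases h : a = b
      · subst h
        simp [diagonal_apply_eq, Complex.real_smul]
        ring
      · simp [diagonal_apply_ne _ h, Matrix.one_apply_ne h]
    rw [hdg, Matrix.mul_smul, Matrix.smul_mul]
    congr 1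
    rw [Matrix.mul_add, Matrix.add_mul, hSA, hSB]
  refine ⟨S⁻¹, d, hd, ?_, ?_, ?_⟩
  · rw [← hSA, inv_conj _ (fun j => by norm_num)]
    congr 1
    congr 1
    funext j
    norm_num
  · rw [← hSB, inv_conj _ (fun j => by exact_mod_cast (hd j).ne')]
    congr 1
    congr 1
    funext j
    push_cast
    rfl
  · rw [← hSC, inv_conj _ (fun j => by
      have := hd j
      exact Complex.ofReal_ne_zero.mpr (ne_of_gt (by linarith)))]
    congr 1
    congr 1
    funext j
    have h1 : (1:ℝ) + d j ≠ 0 := ne_of_gt (by linarith [hd j])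
    push_cast
    field_simp


lemma real_key {ι : Type*} [Fintype ι] (x : ι → ℝ) (hx : ∀ i, 0 < x i) :
    ∏ i, (2/(1+x i)) ≤ (1 + ∏ i, (x i)⁻¹)/2 := by
  set p := ∏ i, (2/(1+x i)) with hp
  have hden : ∀ i, (0:ℝ) < 1 + x i := fun i => by linarith [hx i]
  have hp0 : 0 ≤ p := Finset.prod_nonneg fun i _ => by have := hden i; positivity
  have hq0 : (0:ℝ) ≤ ∏ i, (x i)⁻¹ := Finset.prod_nonneg fun i _ => by
    have := hx i; positivity
  have hsq : p^2 ≤ ∏ i, (x i)⁻¹ := by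
    have h1 : p^2 = ∏ i, (2/(1+x i))^2 := by rw [hp, ← Finset.prod_pow]
    rw [h1]
    apply Finset.prod_le_prod (fun i _ => by positivity)
    intro i _
    rw [div_pow, inv_eq_one_div, div_le_div_iff₀ (by have := hden i; positivity) (hx i)]
    nlinarith [sq_nonneg (x i - 1), hx i]
  nlinarith [sq_nonneg (p - 1)]

end OpConvAux

open OpConvAux in
set_option maxHeartbeats 1000000 in
/-- The function `(t₁,…,t_k) ↦ 1/(t₁⋯t_k)` is operator convex on the positive orthant:
`((A₁+B₁)/2)⁻¹ ⊗ ⋯ ⊗ ((A_k+B_k)/2)⁻¹ ≤ (A₁⁻¹ ⊗ ⋯ ⊗ A_k⁻¹ + B₁⁻¹ ⊗ ⋯ ⊗ B_k⁻¹)/2`. -/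
theorem operator_convexity_inverse_product {k : ℕ} {n : Fin k → ℕ}
    (A B : ∀ i, Matrix (Fin (n i)) (Fin (n i)) ℂ)
    (hA : ∀ i, (A i).PosDef) (hB : ∀ i, (B i).PosDef) :
    (((1:ℝ)/2) • (tensorPi (fun i => (A i)⁻¹) + tensorPi (fun i => (B i)⁻¹)) -
      tensorPi (fun i => (((1:ℝ)/2) • (A i + B i))⁻¹)).PosSemidef := by
  classical
  have key : ∀ i, ∃ (T : Matrix (Fin (n i)) (Fin (n i)) ℂ) (d : Fin (n i) → ℝ),
      (∀ j, 0 < d j) ∧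
      (A i)⁻¹ = Tᴴ * diagonal (fun _ => ((1:ℝ):ℂ)) * T ∧
      (B i)⁻¹ = Tᴴ * diagonal (fun j => (((d j)⁻¹ : ℝ):ℂ)) * T ∧
      (((1:ℝ)/2) • (A i + B i))⁻¹ = Tᴴ * diagonal (fun j => ((2/(1+d j) : ℝ):ℂ)) * T :=
    fun i => decomp (hA i) (hB i)
  choose T d hd h1 h2 h3 using key
  have e1 : tensorPi (fun i => (A i)⁻¹)
      = (tensorPi T)ᴴ * diagonal (fun a : ∀ i, Fin (n i) => ∏ _i : Fin k, ((1:ℝ):ℂ)) * tensorPi T := by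
    rw [show (fun i => (A i)⁻¹)
        = fun i => (T i)ᴴ * diagonal (fun _ => ((1:ℝ):ℂ)) * T i from funext h1]
    exact tensorPi_conj T _
  have e2 : tensorPi (fun i => (B i)⁻¹)
      = (tensorPi T)ᴴ * diagonal (fun a : ∀ i, Fin (n i) => ∏ i, (((d i (a i))⁻¹ : ℝ):ℂ))
          * tensorPi T := by
    rw [show (fun i => (B i)⁻¹)
        = fun i => (T i)ᴴ * diagonal (fun j => (((d i j)⁻¹ : ℝ):ℂ)) * T i from funext h2]
    exact tensorPi_conj T _
  have e3 : tensorPi (fun i => (((1:ℝ)/2) • (A i + B i))⁻¹)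
      = (tensorPi T)ᴴ * diagonal (fun a : ∀ i, Fin (n i) => ∏ i, ((2/(1+d i (a i)) : ℝ):ℂ))
          * tensorPi T := by
    rw [show (fun i => (((1:ℝ)/2) • (A i + B i))⁻¹)
        = fun i => (T i)ᴴ * diagonal (fun j => ((2/(1+d i j) : ℝ):ℂ)) * T i from funext h3]
    exact tensorPi_conj T _
  rw [e1, e2, e3]
  set P := tensorPi T with hP
  set D1 : Matrix (∀ i, Fin (n i)) (∀ i, Fin (n i)) ℂ :=
    diagonal (fun a => ∏ _i : Fin k, ((1:ℝ):ℂ)) with hD1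
  set D2 : Matrix (∀ i, Fin (n i)) (∀ i, Fin (n i)) ℂ :=
    diagonal (fun a => ∏ i, (((d i (a i))⁻¹ : ℝ):ℂ)) with hD2
  set D3 : Matrix (∀ i, Fin (n i)) (∀ i, Fin (n i)) ℂ :=
    diagonal (fun a => ∏ i, ((2/(1+d i (a i)) : ℝ):ℂ)) with hD3
  have hfact : ((1:ℝ)/2) • (Pᴴ * D1 * P + Pᴴ * D2 * P) - Pᴴ * D3 * P
      = Pᴴ * (((1:ℝ)/2) • (D1 + D2) - D3) * P := by
    simp only [Matrix.mul_add, Matrix.add_mul, Matrix.mul_sub, Matrix.sub_mul,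
      Matrix.mul_smul, Matrix.smul_mul]
  rw [hfact]
  have hmid : (((1:ℝ)/2) • (D1 + D2) - D3).PosSemidef := by
    have hdiag : ((1:ℝ)/2) • (D1 + D2) - D3
        = diagonal (fun a : ∀ i, Fin (n i) =>
            (((1 + ∏ i, (d i (a i))⁻¹)/2 - ∏ i, 2/(1+d i (a i)) : ℝ) : ℂ)) := by
      rw [hD1, hD2, hD3]
      ext a b
      by_cases h : a = b
      · subst h
        simp only [Matrix.sub_apply, Matrix.smul_apply, Matrix.add_apply, diagonal_apply_eq,
          Complex.real_smul]
        push_cast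
        simp only [Finset.prod_const_one]
        ring
      · simp [diagonal_apply_ne _ h, Matrix.one_apply_ne h]
    rw [hdiag]
    refine posSemidef_diagonal_iff.mpr fun a => ?_
    rw [Complex.zero_le_real]
    have hk := real_key (fun i => d i (a i)) (fun i => hd i (a i))
    linarith
  exact hmid.conjTranspose_mul_mul_same P
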